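/- For a finite connected subset Ω (#Ω≥2) of a weighted graph, λ₁(Ω) + λ_max(Ω) = 2 if and only if Ω is bipartite as an induced subgraph. -/

import Mathlib

open Finset

variable {V : Type*}

noncomputable def deg (μ : V → V → ℝ) (x : V) : ℝ := ∑ᶠ y, μ x y

noncomputable def eSum (μ : V → V → ℝ) (A B : Finset V) : ℝ :=
  ∑ x ∈ A, ∑ y ∈ B, μ x y

noncomputable def vol (μ : V → V → ℝ) (U : Finset V) : ℝ := ∑ x ∈ U, deg μ x

noncomputable def bdry (μ : V → V → ℝ) (U : Finset V) : ℝ := vol μ U - eSum μ U U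

noncomputable def cheeger (μ : V → V → ℝ) (Ω : Finset V) : ℝ :=
  sInf {r : ℝ | ∃ U : Finset V, U.Nonempty ∧ U ⊆ Ω ∧ r = bdry μ U / vol μ U}

noncomputable def dualCheeger (μ : V → V → ℝ) (Ω : Finset V) : ℝ :=
  sSup {r : ℝ | ∃ V₁ V₂ : Finset V, V₁.Nonempty ∧ V₂.Nonempty ∧ Disjoint V₁ V₂ ∧
    V₁ ⊆ Ω ∧ V₂ ⊆ Ω ∧ r = 2 * eSum μ V₁ V₂ / (vol μ V₁ + vol μ V₂)}

noncomputable def dLap (μ : V → V → ℝ) (Ω : Finset V) (f : V → ℝ) (x : V) : ℝ :=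
  f x - (1 / deg μ x) * ∑ y ∈ Ω, μ x y * f y

def IsDirEigfun (μ : V → V → ℝ) (Ω : Finset V) (lam : ℝ) (f : V → ℝ) : Prop :=
  (∃ x ∈ Ω, f x ≠ 0) ∧ (∀ x ∉ Ω, f x = 0) ∧ ∀ x ∈ Ω, dLap μ Ω f x = lam * f x

def IsDirEig (μ : V → V → ℝ) (Ω : Finset V) (lam : ℝ) : Prop :=
  ∃ f : V → ℝ, IsDirEigfun μ Ω lam f

noncomputable def lam1 (μ : V → V → ℝ) (Ω : Finset V) : ℝ :=
  sInf {l : ℝ | IsDirEig μ Ω l}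

noncomputable def lamMax (μ : V → V → ℝ) (Ω : Finset V) : ℝ :=
  sSup {l : ℝ | IsDirEig μ Ω l}

def ConnectedOn (μ : V → V → ℝ) (Ω : Finset V) : Prop :=
  ∀ x ∈ Ω, ∀ y ∈ Ω,
    Relation.ReflTransGen (fun a b => a ∈ Ω ∧ b ∈ Ω ∧ μ a b ≠ 0) x y

def BipartiteOn (μ : V → V → ℝ) (Ω : Finset V) : Prop :=
  ∃ U₁ U₂ : Finset V, Disjoint U₁ U₂ ∧ (U₁ : Set V) ∪ ↑U₂ = ↑Ω ∧
    (∀ x ∈ U₁, ∀ y ∈ U₁, μ x y = 0) ∧ (∀ x ∈ U₂, ∀ y ∈ U₂, μ x y = 0)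

section op

variable (μ : V → V → ℝ) (Ω : Finset V)

/-- sum of weights into `Ω` is at most the degree -/
lemma sumΩ_le_deg (hnn : ∀ x y, 0 ≤ μ x y) (hfin : ∀ x : V, (Function.support (μ x)).Finite)
    (x : V) : ∑ y ∈ Ω, μ x y ≤ deg μ x := by
  classical
  have h1 : deg μ x = ∑ y ∈ (hfin x).toFinset ∪ Ω, μ x y := by
    refine finsum_eq_sum_of_support_subset _ ?_
    intro y hy
    simp only [Finset.coe_union, Set.mem_union, Set.Finite.coe_toFinset]
    exact Or.inl hy
  rw [h1]
  exact Finset.sum_le_sum_of_subset_of_nonneg Finset.subset_union_right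
    (fun y _ _ => hnn x y)

/-- normalized eigen-equation -/
lemma eig_sum (hdeg : ∀ x : V, 0 < deg μ x) {l : ℝ} {f : V → ℝ}
    (hf : ∀ x ∈ Ω, dLap μ Ω f x = l * f x) {x : V} (hx : x ∈ Ω) :
    ∑ y ∈ Ω, μ x y * f y = (1 - l) * (deg μ x * f x) := by
  have h := hf x hx
  unfold dLap at h
  have hd := (hdeg x).ne'
  field_simp at h
  linarith

noncomputable def sM (x y : {a : V // a ∈ Ω}) : ℝ :=
  μ x y / (Real.sqrt (deg μ x) * Real.sqrt (deg μ y))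

lemma sM_symm (hsymm : ∀ x y, μ x y = μ y x) (x y : {a : V // a ∈ Ω}) :
    sM μ Ω x y = sM μ Ω y x := by
  unfold sM; rw [hsymm ↑x ↑y, mul_comm]

lemma sM_nonneg (hnn : ∀ x y, 0 ≤ μ x y) (x y : {a : V // a ∈ Ω}) :
    0 ≤ sM μ Ω x y :=
  div_nonneg (hnn _ _) (by positivity)

noncomputable def TL : EuclideanSpace ℝ {a : V // a ∈ Ω} →ₗ[ℝ] EuclideanSpace ℝ {a : V // a ∈ Ω} where
  toFun u := WithLp.toLp 2 (fun x => u x - ∑ y, sM μ Ω x y * u y)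
  map_add' u v := by
    ext x
    simp only [PiLp.toLp_apply, PiLp.add_apply, mul_add, Finset.sum_add_distrib]
    ring
  map_smul' c u := by
    ext x
    simp only [PiLp.toLp_apply, PiLp.smul_apply, smul_eq_mul, RingHom.id_apply]
    rw [show (∑ y, sM μ Ω x y * (c * u y)) = ∑ y, c * (sM μ Ω x y * u y) from
      Finset.sum_congr rfl (fun y _ => by ring), ← Finset.mul_sum]
    ring

lemma TL_apply (u : EuclideanSpace ℝ {a : V // a ∈ Ω}) (x : {a : V // a ∈ Ω}) :
    TL μ Ω u x = u x - ∑ y, sM μ Ω x y * u y := rfl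

lemma inner_eucl (u v : EuclideanSpace ℝ {a : V // a ∈ Ω}) :
    (inner ℝ u v : ℝ) = ∑ x, u x * v x := by
  rw [PiLp.inner_apply]
  simp [RCLike.inner_apply]
  exact Finset.sum_congr rfl fun x _ => mul_comm _ _

lemma TL_symm (hsymm : ∀ x y, μ x y = μ y x) : (TL μ Ω).IsSymmetric := by
  intro u v
  rw [inner_eucl, inner_eucl]
  simp only [TL_apply, sub_mul, mul_sub, Finset.sum_sub_distrib, Finset.sum_mul, Finset.mul_sum]
  congr 1
  rw [Finset.sum_comm]
  apply Finset.sum_congr rfl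
  intro x _
  apply Finset.sum_congr rfl
  intro y _
  rw [sM_symm μ Ω hsymm y x]
  ring

lemma inner_TL (u : EuclideanSpace ℝ {a : V // a ∈ Ω}) :
    (inner ℝ (TL μ Ω u) u : ℝ) = (∑ x, u x ^ 2) - ∑ x, ∑ y, sM μ Ω x y * u x * u y := by
  rw [inner_eucl]
  simp only [TL_apply, sub_mul, Finset.sum_sub_distrib, Finset.sum_mul]
  congr 1
  · exact Finset.sum_congr rfl fun x _ => (sq (u x)).symm ▸ by ring
  · apply Finset.sum_congr rfl
    intro x _
    apply Finset.sum_congr rfl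
    intro y _
    ring

lemma norm_sq_eucl (u : EuclideanSpace ℝ {a : V // a ∈ Ω}) :
    ‖u‖ ^ 2 = ∑ x, u x ^ 2 := by
  rw [← real_inner_self_eq_norm_sq, inner_eucl]
  exact Finset.sum_congr rfl fun x _ => (sq (u x)).symm

lemma Q_bound (hsymm : ∀ x y, μ x y = μ y x) (hnn : ∀ x y, 0 ≤ μ x y)
    (hfin : ∀ x : V, (Function.support (μ x)).Finite) (hdeg : ∀ x : V, 0 < deg μ x)
    (u : EuclideanSpace ℝ {a : V // a ∈ Ω}) :
    |∑ x, ∑ y, sM μ Ω x y * u x * u y| ≤ ∑ x, u x ^ 2 := by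
  classical
  set a : {a : V // a ∈ Ω} → ℝ := fun x => u x / Real.sqrt (deg μ ↑x) with ha
  have hsq : ∀ x : {a : V // a ∈ Ω}, 0 < Real.sqrt (deg μ ↑x) :=
    fun x => Real.sqrt_pos.mpr (hdeg _)
  have key : ∀ x y, sM μ Ω x y * u x * u y = μ ↑x ↑y * (a x * a y) := by
    intro x y
    unfold sM
    rw [ha]
    field_simp
  have habs : |∑ x, ∑ y, sM μ Ω x y * u x * u y| ≤ ∑ x : {a : V // a ∈ Ω}, ∑ y : {a : V // a ∈ Ω}, μ ↑x ↑y * |a x * a y| := by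
    simp_rw [key]
    refine (Finset.abs_sum_le_sum_abs _ _).trans (Finset.sum_le_sum fun x _ => ?_)
    refine (Finset.abs_sum_le_sum_abs _ _).trans (Finset.sum_le_sum fun y _ => ?_)
    rw [abs_mul, abs_of_nonneg (hnn _ _)]
  have hstep : ∀ x y : {a : V // a ∈ Ω},
      μ ↑x ↑y * |a x * a y| ≤ μ ↑x ↑y * (a x ^ 2 / 2) + μ ↑x ↑y * (a y ^ 2 / 2) := by
    intro x y
    have h2 : |a x * a y| ≤ (a x ^ 2 + a y ^ 2) / 2 := by
      rw [abs_mul]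
      nlinarith [sq_nonneg (|a x| - |a y|), sq_abs (a x), sq_abs (a y)]
    nlinarith [hnn (↑x : V) ↑y]
  have hrowle : ∀ x : {a : V // a ∈ Ω}, (∑ y : {a : V // a ∈ Ω}, μ ↑x ↑y) ≤ deg μ ↑x := by
    intro x
    rw [Finset.sum_coe_sort Ω (fun y => μ ↑x y)]
    exact sumΩ_le_deg μ Ω hnn hfin ↑x
  calc |∑ x, ∑ y, sM μ Ω x y * u x * u y|
      ≤ ∑ x : {a : V // a ∈ Ω}, ∑ y : {a : V // a ∈ Ω}, μ ↑x ↑y * |a x * a y| := habs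
    _ ≤ ∑ x : {a : V // a ∈ Ω}, ∑ y : {a : V // a ∈ Ω}, (μ ↑x ↑y * (a x ^ 2 / 2) + μ ↑x ↑y * (a y ^ 2 / 2)) :=
        Finset.sum_le_sum fun x _ => Finset.sum_le_sum fun y _ => hstep x y
    _ = (∑ x : {a : V // a ∈ Ω}, (∑ y : {a : V // a ∈ Ω}, μ ↑x ↑y) * (a x ^ 2 / 2)) + ∑ y : {a : V // a ∈ Ω}, (∑ x : {a : V // a ∈ Ω}, μ ↑x ↑y) * (a y ^ 2 / 2) := by
        simp_rw [Finset.sum_add_distrib]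
        congr 1
        · exact Finset.sum_congr rfl fun x _ => (Finset.sum_mul _ _ _).symm
        · rw [Finset.sum_comm]
          exact Finset.sum_congr rfl fun y _ => (Finset.sum_mul _ _ _).symm
    _ ≤ (∑ x : {a : V // a ∈ Ω}, deg μ ↑x * (a x ^ 2 / 2)) + ∑ x : {a : V // a ∈ Ω}, deg μ ↑x * (a x ^ 2 / 2) := by
        refine add_le_add (Finset.sum_le_sum fun x _ => ?_) (Finset.sum_le_sum fun y _ => ?_)
        · exact mul_le_mul_of_nonneg_right (hrowle x) (by positivity)
        · refine mul_le_mul_of_nonneg_right ?_ (by positivity)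
          calc (∑ x : {a : V // a ∈ Ω}, μ ↑x ↑y) = ∑ x : {a : V // a ∈ Ω}, μ ↑y ↑x :=
                Finset.sum_congr rfl fun x _ => hsymm ↑x ↑y
            _ ≤ deg μ ↑y := hrowle y
    _ = ∑ x : {a : V // a ∈ Ω}, u x ^ 2 := by
        rw [← Finset.sum_add_distrib]
        refine Finset.sum_congr rfl fun x _ => ?_
        rw [ha]
        simp only
        rw [div_pow, Real.sq_sqrt (hdeg (↑x : V)).le]
        field_simp
        rw [div_eq_iff (hdeg (↑x:V)).ne']
        ring


noncomputable def toU (f : V → ℝ) : EuclideanSpace ℝ {a : V // a ∈ Ω} :=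
  WithLp.toLp 2 (fun x => Real.sqrt (deg μ ↑x) * f ↑x)

open scoped Classical in
noncomputable def fromU (u : EuclideanSpace ℝ {a : V // a ∈ Ω}) : V → ℝ :=
  fun x => if h : x ∈ Ω then u ⟨x, h⟩ / Real.sqrt (deg μ x) else 0

lemma dir_vec (hdeg : ∀ x : V, 0 < deg μ x) {l : ℝ} {f : V → ℝ}
    (hf : IsDirEigfun μ Ω l f) :
    Module.End.HasEigenvector (TL μ Ω) l (toU μ Ω f) := by
  obtain ⟨⟨x0, hx0, hfx0⟩, _hsupp, heq⟩ := hf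
  constructor
  · rw [Module.End.mem_eigenspace_iff]
    ext x
    have hdx := hdeg (↑x : V)
    have hsx : Real.sqrt (deg μ ↑x) ≠ 0 := (Real.sqrt_pos.mpr hdx).ne'
    have h1 : ∀ y : {a : V // a ∈ Ω}, sM μ Ω x y * (toU μ Ω f y)
        = μ ↑x ↑y * f ↑y / Real.sqrt (deg μ ↑x) := by
      intro y
      have hsy : Real.sqrt (deg μ ↑y) ≠ 0 := (Real.sqrt_pos.mpr (hdeg ↑y)).ne'
      unfold sM toU
      field_simp
    have h2 : (∑ y, sM μ Ω x y * (toU μ Ω f y))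
        = (∑ y ∈ Ω, μ ↑x y * f y) / Real.sqrt (deg μ ↑x) := by
      rw [show (∑ y, sM μ Ω x y * (toU μ Ω f y))
          = ∑ y : {a : V // a ∈ Ω}, μ ↑x ↑y * f ↑y / Real.sqrt (deg μ ↑x) from
        Finset.sum_congr rfl fun y _ => h1 y]
      rw [Finset.sum_coe_sort Ω (fun y => μ ↑x y * f y / Real.sqrt (deg μ ↑x)),
        ← Finset.sum_div]
    show toU μ Ω f x - ∑ y, sM μ Ω x y * (toU μ Ω f y) = (l • toU μ Ω f) x
    rw [h2, eig_sum μ Ω hdeg heq x.2]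
    show Real.sqrt (deg μ ↑x) * f ↑x - _ = l * (Real.sqrt (deg μ ↑x) * f ↑x)
    have hss : Real.sqrt (deg μ ↑x) * Real.sqrt (deg μ ↑x) = deg μ ↑x :=
      Real.mul_self_sqrt hdx.le
    field_simp
    linear_combination (1 - l) * f ↑x * hss
  · intro h0
    have := congrArg (fun v => v.ofLp ⟨x0, hx0⟩) h0
    simp only [toU] at this
    exact hfx0 (by
      have hsx : Real.sqrt (deg μ x0) ≠ 0 := (Real.sqrt_pos.mpr (hdeg x0)).ne'
      have : Real.sqrt (deg μ x0) * f x0 = 0 := this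
      rcases mul_eq_zero.mp this with h | h
      · exact absurd h hsx
      · exact h)

lemma vec_dir (hdeg : ∀ x : V, 0 < deg μ x) {l : ℝ} {u : EuclideanSpace ℝ {a : V // a ∈ Ω}}
    (hu : Module.End.HasEigenvector (TL μ Ω) l u) :
    IsDirEigfun μ Ω l (fromU μ Ω u) := by
  have happ : ∀ x : {a : V // a ∈ Ω}, u x - ∑ y, sM μ Ω x y * u y = l * u x := by
    intro x
    have := congrArg (fun v => v.ofLp x) (Module.End.mem_eigenspace_iff.mp hu.1)
    exact this
  have hux : ∃ x : {a : V // a ∈ Ω}, u x ≠ 0 := by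
    by_contra h
    push_neg at h
    exact hu.2 (PiLp.ext h)
  refine ⟨?_, ?_, ?_⟩
  · obtain ⟨x, hx⟩ := hux
    refine ⟨↑x, x.2, ?_⟩
    unfold fromU
    rw [dif_pos x.2]
    have hsx : Real.sqrt (deg μ ↑x) ≠ 0 := (Real.sqrt_pos.mpr (hdeg ↑x)).ne'
    simp only [Subtype.coe_eta]
    exact div_ne_zero hx hsx
  · intro x hx
    unfold fromU
    rw [dif_neg hx]
  · intro x hx
    have hdx := hdeg x
    have hsx : Real.sqrt (deg μ x) ≠ 0 := (Real.sqrt_pos.mpr hdx).ne'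
    have hsum : ∑ y ∈ Ω, μ x y * fromU μ Ω u y
        = Real.sqrt (deg μ x) * ∑ y, sM μ Ω ⟨x, hx⟩ y * u y := by
      rw [← Finset.sum_coe_sort Ω (fun y => μ x y * fromU μ Ω u y), Finset.mul_sum]
      refine Finset.sum_congr rfl fun y _ => ?_
      have hsy : Real.sqrt (deg μ ↑y) ≠ 0 := (Real.sqrt_pos.mpr (hdeg ↑y)).ne'
      unfold fromU sM
      rw [dif_pos y.2]
      simp only [Subtype.coe_eta]
      field_simp
    have hkey : ∑ y, sM μ Ω ⟨x, hx⟩ y * u y = (1 - l) * u ⟨x, hx⟩ := by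
      have := happ ⟨x, hx⟩
      linarith
    have hfx : fromU μ Ω u x = u ⟨x, hx⟩ / Real.sqrt (deg μ x) := dif_pos hx
    unfold dLap
    rw [hsum, hkey, hfx]
    have hss : Real.sqrt (deg μ x) * Real.sqrt (deg μ x) = deg μ x :=
      Real.mul_self_sqrt hdx.le
    field_simp
    linear_combination (u ⟨x, hx⟩ * (l - 1)) * hss

lemma rayleigh_bounds (hsymm : ∀ x y, μ x y = μ y x) (hnn : ∀ x y, 0 ≤ μ x y)
    (hfin : ∀ x : V, (Function.support (μ x)).Finite) (hdeg : ∀ x : V, 0 < deg μ x)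
    {u : EuclideanSpace ℝ {a : V // a ∈ Ω}} (hu : u ≠ 0) :
    0 ≤ (inner ℝ (TL μ Ω u) u : ℝ) / ‖u‖ ^ 2 ∧ (inner ℝ (TL μ Ω u) u : ℝ) / ‖u‖ ^ 2 ≤ 2 := by
  have hn0 : ‖u‖ ≠ 0 := norm_ne_zero_iff.mpr hu
  have h0 : 0 < ‖u‖ ^ 2 := by positivity
  have hn2 : ‖u‖ ^ 2 = ∑ x, u x ^ 2 := norm_sq_eucl Ω u
  have hQ := Q_bound μ Ω hsymm hnn hfin hdeg u
  have hIT := inner_TL μ Ω u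
  constructor
  · apply div_nonneg _ h0.le
    rw [hIT]
    have := le_abs_self (∑ x, ∑ y, sM μ Ω x y * u x * u y)
    linarith
  · rw [div_le_iff₀ h0, hIT, hn2]
    have := neg_abs_le (∑ x, ∑ y, sM μ Ω x y * u x * u y)
    linarith

noncomputable def rMin : ℝ :=
  ⨅ x : {x : EuclideanSpace ℝ {a : V // a ∈ Ω} // x ≠ 0},
    (inner ℝ (TL μ Ω ↑x) ↑x : ℝ) / ‖(↑x : EuclideanSpace ℝ {a : V // a ∈ Ω})‖ ^ 2

noncomputable def rMax : ℝ :=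
  ⨆ x : {x : EuclideanSpace ℝ {a : V // a ∈ Ω} // x ≠ 0},
    (inner ℝ (TL μ Ω ↑x) ↑x : ℝ) / ‖(↑x : EuclideanSpace ℝ {a : V // a ∈ Ω})‖ ^ 2

lemma bdd_below_rayleigh (hsymm : ∀ x y, μ x y = μ y x) (hnn : ∀ x y, 0 ≤ μ x y)
    (hfin : ∀ x : V, (Function.support (μ x)).Finite) (hdeg : ∀ x : V, 0 < deg μ x) :
    BddBelow (Set.range fun x : {x : EuclideanSpace ℝ {a : V // a ∈ Ω} // x ≠ 0} =>
      (inner ℝ (TL μ Ω ↑x) ↑x : ℝ) / ‖(↑x : EuclideanSpace ℝ {a : V // a ∈ Ω})‖ ^ 2) := by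
  refine ⟨0, ?_⟩
  rintro r ⟨x, rfl⟩
  exact (rayleigh_bounds μ Ω hsymm hnn hfin hdeg x.2).1

lemma bdd_above_rayleigh (hsymm : ∀ x y, μ x y = μ y x) (hnn : ∀ x y, 0 ≤ μ x y)
    (hfin : ∀ x : V, (Function.support (μ x)).Finite) (hdeg : ∀ x : V, 0 < deg μ x) :
    BddAbove (Set.range fun x : {x : EuclideanSpace ℝ {a : V // a ∈ Ω} // x ≠ 0} =>
      (inner ℝ (TL μ Ω ↑x) ↑x : ℝ) / ‖(↑x : EuclideanSpace ℝ {a : V // a ∈ Ω})‖ ^ 2) := by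
  refine ⟨2, ?_⟩
  rintro r ⟨x, rfl⟩
  exact (rayleigh_bounds μ Ω hsymm hnn hfin hdeg x.2).2

lemma eig_eq_rayleigh {l : ℝ} {u : EuclideanSpace ℝ {a : V // a ∈ Ω}}
    (hu : Module.End.HasEigenvector (TL μ Ω) l u) :
    l = (inner ℝ (TL μ Ω u) u : ℝ) / ‖u‖ ^ 2 := by
  have h1 : TL μ Ω u = l • u := Module.End.mem_eigenspace_iff.mp hu.1
  have h2 : (inner ℝ (TL μ Ω u) u : ℝ) = l * ‖u‖ ^ 2 := by
    rw [h1, real_inner_smul_left, real_inner_self_eq_norm_sq]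
  have hn0 : ‖u‖ ≠ 0 := norm_ne_zero_iff.mpr hu.2
  rw [h2, mul_div_assoc, div_self (by positivity : ‖u‖ ^ 2 ≠ 0), mul_one]

lemma dirEig_bounds (hsymm : ∀ x y, μ x y = μ y x) (hnn : ∀ x y, 0 ≤ μ x y)
    (hfin : ∀ x : V, (Function.support (μ x)).Finite) (hdeg : ∀ x : V, 0 < deg μ x)
    {l : ℝ} (hl : IsDirEig μ Ω l) : 0 ≤ l ∧ l ≤ 2 := by
  obtain ⟨f, hf⟩ := hl
  have hv := dir_vec μ Ω hdeg hf
  rw [eig_eq_rayleigh μ Ω hv]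
  exact rayleigh_bounds μ Ω hsymm hnn hfin hdeg hv.2

lemma rMin_le_dirEig (hsymm : ∀ x y, μ x y = μ y x) (hnn : ∀ x y, 0 ≤ μ x y)
    (hfin : ∀ x : V, (Function.support (μ x)).Finite) (hdeg : ∀ x : V, 0 < deg μ x)
    {l : ℝ} (hl : IsDirEig μ Ω l) : rMin μ Ω ≤ l := by
  obtain ⟨f, hf⟩ := hl
  have hv := dir_vec μ Ω hdeg hf
  rw [eig_eq_rayleigh μ Ω hv]
  exact ciInf_le (bdd_below_rayleigh μ Ω hsymm hnn hfin hdeg) ⟨_, hv.2⟩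

lemma dirEig_le_rMax (hsymm : ∀ x y, μ x y = μ y x) (hnn : ∀ x y, 0 ≤ μ x y)
    (hfin : ∀ x : V, (Function.support (μ x)).Finite) (hdeg : ∀ x : V, 0 < deg μ x)
    {l : ℝ} (hl : IsDirEig μ Ω l) : l ≤ rMax μ Ω := by
  obtain ⟨f, hf⟩ := hl
  have hv := dir_vec μ Ω hdeg hf
  rw [eig_eq_rayleigh μ Ω hv]
  exact le_ciSup (bdd_above_rayleigh μ Ω hsymm hnn hfin hdeg) ⟨_, hv.2⟩

lemma nontrivE (hΩ : Ω.Nonempty) : Nontrivial (EuclideanSpace ℝ {a : V // a ∈ Ω}) := by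
  classical
  obtain ⟨x, hx⟩ := hΩ
  refine ⟨⟨EuclideanSpace.single ⟨x, hx⟩ (1 : ℝ), 0, ?_⟩⟩
  intro h
  have := congrArg (fun v => v.ofLp ⟨x, hx⟩) h
  rw [EuclideanSpace.single_apply] at this
  simp at this

lemma hasEig_rMin (hΩ : Ω.Nonempty) (hsymm : ∀ x y, μ x y = μ y x) :
    Module.End.HasEigenvalue (TL μ Ω) (rMin μ Ω) := by
  haveI := nontrivE Ω hΩ
  have h := LinearMap.IsSymmetric.hasEigenvalue_iInf_of_finiteDimensional
    (TL_symm μ Ω hsymm)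
  have he : (⨅ x : {x : EuclideanSpace ℝ {a : V // a ∈ Ω} // x ≠ 0},
      RCLike.re (inner ℝ (TL μ Ω ↑x) ↑x : ℝ) / ‖(↑x : EuclideanSpace ℝ {a : V // a ∈ Ω})‖ ^ 2)
      = rMin μ Ω := by
    exact iInf_congr fun x => by rw [RCLike.re_to_real]
  rwa [he] at h

lemma hasEig_rMax (hΩ : Ω.Nonempty) (hsymm : ∀ x y, μ x y = μ y x) :
    Module.End.HasEigenvalue (TL μ Ω) (rMax μ Ω) := by
  haveI := nontrivE Ω hΩ
  have h := LinearMap.IsSymmetric.hasEigenvalue_iSup_of_finiteDimensional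
    (TL_symm μ Ω hsymm)
  have he : (⨆ x : {x : EuclideanSpace ℝ {a : V // a ∈ Ω} // x ≠ 0},
      RCLike.re (inner ℝ (TL μ Ω ↑x) ↑x : ℝ) / ‖(↑x : EuclideanSpace ℝ {a : V // a ∈ Ω})‖ ^ 2)
      = rMax μ Ω := by
    exact iSup_congr fun x => by rw [RCLike.re_to_real]
  rwa [he] at h

lemma isDirEig_rMin (hΩ : Ω.Nonempty) (hsymm : ∀ x y, μ x y = μ y x)
    (hdeg : ∀ x : V, 0 < deg μ x) : IsDirEig μ Ω (rMin μ Ω) := by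
  obtain ⟨u, hu⟩ := (hasEig_rMin μ Ω hΩ hsymm).exists_hasEigenvector
  exact ⟨fromU μ Ω u, vec_dir μ Ω hdeg hu⟩

lemma isDirEig_rMax (hΩ : Ω.Nonempty) (hsymm : ∀ x y, μ x y = μ y x)
    (hdeg : ∀ x : V, 0 < deg μ x) : IsDirEig μ Ω (rMax μ Ω) := by
  obtain ⟨u, hu⟩ := (hasEig_rMax μ Ω hΩ hsymm).exists_hasEigenvector
  exact ⟨fromU μ Ω u, vec_dir μ Ω hdeg hu⟩

lemma lam1_eq_rMin (hΩ : Ω.Nonempty) (hsymm : ∀ x y, μ x y = μ y x) (hnn : ∀ x y, 0 ≤ μ x y)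
    (hfin : ∀ x : V, (Function.support (μ x)).Finite) (hdeg : ∀ x : V, 0 < deg μ x) :
    lam1 μ Ω = rMin μ Ω := by
  refine le_antisymm ?_ ?_
  · exact csInf_le ⟨0, fun l hl => (dirEig_bounds μ Ω hsymm hnn hfin hdeg hl).1⟩
      (isDirEig_rMin μ Ω hΩ hsymm hdeg)
  · exact le_csInf ⟨_, isDirEig_rMin μ Ω hΩ hsymm hdeg⟩
      fun l hl => rMin_le_dirEig μ Ω hsymm hnn hfin hdeg hl

lemma lamMax_eq_rMax (hΩ : Ω.Nonempty) (hsymm : ∀ x y, μ x y = μ y x) (hnn : ∀ x y, 0 ≤ μ x y)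
    (hfin : ∀ x : V, (Function.support (μ x)).Finite) (hdeg : ∀ x : V, 0 < deg μ x) :
    lamMax μ Ω = rMax μ Ω := by
  refine le_antisymm ?_ ?_
  · exact csSup_le ⟨_, isDirEig_rMax μ Ω hΩ hsymm hdeg⟩
      fun l hl => dirEig_le_rMax μ Ω hsymm hnn hfin hdeg hl
  · exact le_csSup ⟨2, fun l hl => (dirEig_bounds μ Ω hsymm hnn hfin hdeg hl).2⟩
      (isDirEig_rMax μ Ω hΩ hsymm hdeg)

lemma exists_nonneg_groundstate (hΩ : Ω.Nonempty) (hsymm : ∀ x y, μ x y = μ y x)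
    (hnn : ∀ x y, 0 ≤ μ x y) (hfin : ∀ x : V, (Function.support (μ x)).Finite)
    (hdeg : ∀ x : V, 0 < deg μ x) :
    ∃ u : EuclideanSpace ℝ {a : V // a ∈ Ω},
      Module.End.HasEigenvector (TL μ Ω) (rMin μ Ω) u ∧ ∀ x, 0 ≤ u x := by
  classical
  obtain ⟨u0, hu0⟩ := (hasEig_rMin μ Ω hΩ hsymm).exists_hasEigenvector
  set w : EuclideanSpace ℝ {a : V // a ∈ Ω} := WithLp.toLp 2 (fun x => |u0 x|) with hw
  have hwnn : ∀ x, 0 ≤ w x := fun x => abs_nonneg _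
  have hw0 : w ≠ 0 := by
    intro h
    apply hu0.2
    ext x
    have h1 : |u0 x| = 0 := congrArg (fun v => v.ofLp x) h
    exact abs_eq_zero.mp h1
  have hsumw : ∑ x, w x ^ 2 = ∑ x, u0 x ^ 2 :=
    Finset.sum_congr rfl fun x _ => by rw [hw]; exact sq_abs (u0 x)
  have hnorm2 : ‖w‖ ^ 2 = ‖u0‖ ^ 2 := by
    rw [norm_sq_eucl Ω w, norm_sq_eucl Ω u0]; exact hsumw
  have hnorm : ‖w‖ = ‖u0‖ := by nlinarith [norm_nonneg w, norm_nonneg u0]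
  have hIu : (inner ℝ (TL μ Ω u0) u0 : ℝ) = rMin μ Ω * ‖u0‖ ^ 2 := by
    rw [Module.End.mem_eigenspace_iff.mp hu0.1, real_inner_smul_left,
      real_inner_self_eq_norm_sq]
  have hQge : ∑ x, ∑ y, sM μ Ω x y * u0 x * u0 y ≤ ∑ x, ∑ y, sM μ Ω x y * w x * w y := by
    have h1 : ∑ x, ∑ y, sM μ Ω x y * u0 x * u0 y
        ≤ |∑ x, ∑ y, sM μ Ω x y * u0 x * u0 y| := le_abs_self _
    refine h1.trans ?_
    refine (Finset.abs_sum_le_sum_abs _ _).trans (Finset.sum_le_sum fun x _ => ?_)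
    refine (Finset.abs_sum_le_sum_abs _ _).trans (Finset.sum_le_sum fun y _ => ?_)
    rw [abs_mul, abs_mul, abs_of_nonneg (sM_nonneg μ Ω hnn x y)]
  have hQle : (inner ℝ (TL μ Ω w) w : ℝ) ≤ rMin μ Ω * ‖w‖ ^ 2 := by
    rw [inner_TL μ Ω w]
    rw [inner_TL μ Ω u0] at hIu
    rw [hnorm2, hsumw]
    linarith
  set TC := LinearMap.toContinuousLinearMap (TL μ Ω) with hTC
  have hTCapp : ∀ v, TC v = TL μ Ω v := fun v => rfl
  have hreap : ∀ v, TC.reApplyInnerSelf v = (inner ℝ (TL μ Ω v) v : ℝ) := fun v => rfl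
  have hmin : IsMinOn TC.reApplyInnerSelf (Metric.sphere (0 : EuclideanSpace ℝ {a : V // a ∈ Ω}) ‖w‖) w := by
    intro v hv
    have hvn : ‖v‖ = ‖w‖ := by
      simpa [Metric.mem_sphere, dist_zero_right] using hv
    have hwpos : 0 < ‖w‖ := norm_pos_iff.mpr hw0
    have hv0 : v ≠ 0 := by
      intro h
      rw [h, norm_zero] at hvn
      exact hwpos.ne (hvn)
    have h2 : rMin μ Ω ≤ (inner ℝ (TL μ Ω v) v : ℝ) / ‖v‖ ^ 2 :=
      ciInf_le (bdd_below_rayleigh μ Ω hsymm hnn hfin hdeg) ⟨v, hv0⟩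
    have hv2 : 0 < ‖v‖ ^ 2 := pow_pos (norm_pos_iff.mpr hv0) 2
    have h3 : rMin μ Ω * ‖v‖ ^ 2 ≤ (inner ℝ (TL μ Ω v) v : ℝ) := by
      exact (le_div_iff₀ hv2).mp h2
    show TC.reApplyInnerSelf w ≤ TC.reApplyInnerSelf v
    rw [hreap, hreap]
    calc (inner ℝ (TL μ Ω w) w : ℝ) ≤ rMin μ Ω * ‖w‖ ^ 2 := hQle
      _ = rMin μ Ω * ‖v‖ ^ 2 := by rw [hvn]
      _ ≤ _ := h3
  have hself : IsSelfAdjoint TC :=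
    ContinuousLinearMap.isSelfAdjoint_iff_isSymmetric.mpr
      (by
        intro a b
        exact TL_symm μ Ω hsymm a b)
  have hev := hself.hasEigenvector_of_isMinOn hw0 hmin
  have hval : (⨅ x : {x : EuclideanSpace ℝ {a : V // a ∈ Ω} // x ≠ 0},
      TC.rayleighQuotient ↑x) = rMin μ Ω := iInf_congr fun x => rfl
  rw [hval] at hev
  refine ⟨w, ?_, hwnn⟩
  have hcoe : ((TC : EuclideanSpace ℝ {a : V // a ∈ Ω} →L[ℝ]
      EuclideanSpace ℝ {a : V // a ∈ Ω}) : EuclideanSpace ℝ {a : V // a ∈ Ω} →ₗ[ℝ]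
      EuclideanSpace ℝ {a : V // a ∈ Ω}) = TL μ Ω := LinearMap.coe_toContinuousLinearMap _
  rw [hcoe] at hev
  exact_mod_cast hev

lemma prop_pos (hconn : ConnectedOn μ Ω) (F : V → ℝ)
    (hF0 : ∀ x ∈ Ω, 0 ≤ F x)
    (hzero : ∀ x ∈ Ω, F x = 0 → ∀ y ∈ Ω, μ x y ≠ 0 → F y = 0)
    (hne : ∃ x ∈ Ω, F x ≠ 0) : ∀ x ∈ Ω, 0 < F x := by
  obtain ⟨x0, hx0, hFx0⟩ := hne
  intro x hx
  rcases (hF0 x hx).lt_or_eq with h | h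
  · exact h
  exfalso
  have hchain := hconn x hx x0 hx0
  have hzz : ∀ b, Relation.ReflTransGen (fun a b => a ∈ Ω ∧ b ∈ Ω ∧ μ a b ≠ 0) x b → F b = 0 := by
    intro b hb
    induction hb with
    | refl => exact h.symm
    | tail _ hstep ih => exact hzero _ hstep.1 ih _ hstep.2.1 hstep.2.2
  exact hFx0 (hzz x0 hchain)

lemma bip_flip (hdeg : ∀ x : V, 0 < deg μ x)
    (hbip : BipartiteOn μ Ω) {l : ℝ} (hl : IsDirEig μ Ω l) : IsDirEig μ Ω (2 - l) := by
  classical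
  obtain ⟨U₁, U₂, hdisj, hunion, hb1, hb2⟩ := hbip
  obtain ⟨f, ⟨⟨x0, hx0, hf0⟩, hsupp, heq⟩⟩ := hl
  set g : V → ℝ := fun x => if x ∈ U₁ then f x else -f x with hg
  have hUmem : ∀ x ∈ Ω, x ∈ U₁ ∨ x ∈ U₂ := by
    intro x hx
    have h : x ∈ (U₁ : Set V) ∪ ↑U₂ := hunion ▸ (Finset.mem_coe.mpr hx)
    simpa using h
  have hΩ1 : ∀ x, x ∈ U₁ → x ∈ Ω := by
    intro x hx
    have h : (x : V) ∈ (U₁ : Set V) ∪ ↑U₂ := Or.inl (Finset.mem_coe.mpr hx)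
    rw [hunion] at h
    simpa using h
  refine ⟨g, ⟨x0, hx0, ?_⟩, ?_, ?_⟩
  · rw [hg]
    by_cases h : x0 ∈ U₁ <;> simp [h, hf0]
  · intro x hx
    have hfx : f x = 0 := hsupp x hx
    have hx1 : x ∉ U₁ := fun hh => hx (hΩ1 x hh)
    rw [hg]
    simp [hx1, hfx]
  · intro x hx
    have hdx := (hdeg x).ne'
    have hfe := eig_sum μ Ω hdeg heq hx
    rcases hUmem x hx with hxU | hxU
    · have hsum : ∑ y ∈ Ω, μ x y * g y = -∑ y ∈ Ω, μ x y * f y := by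
        rw [← Finset.sum_neg_distrib]
        refine Finset.sum_congr rfl fun y _ => ?_
        by_cases hyU : y ∈ U₁
        · rw [hb1 x hxU y hyU]; ring
        · have hgy : g y = -f y := by rw [hg]; simp [hyU]
          rw [hgy]; ring
      have hgx : g x = f x := by rw [hg]; simp [hxU]
      unfold dLap
      rw [hsum, hfe, hgx]
      field_simp
      ring
    · have hxU1 : x ∉ U₁ := fun hh => (Finset.disjoint_left.mp hdisj hh) hxU
      have hsum : ∑ y ∈ Ω, μ x y * g y = ∑ y ∈ Ω, μ x y * f y := by
        refine Finset.sum_congr rfl fun y hy => ?_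
        by_cases hyU : y ∈ U₁
        · have hgy : g y = f y := by rw [hg]; simp [hyU]
          rw [hgy]
        · have hyU2 : y ∈ U₂ := (hUmem y hy).resolve_left hyU
          rw [hb2 x hxU y hyU2]; ring
      have hgx : g x = -f x := by rw [hg]; simp [hxU1]
      unfold dLap
      rw [hsum, hfe, hgx]
      field_simp
      ring

end op

theorem stmt2 {V : Type*} [Infinite V] (μ : V → V → ℝ) (hsymm : ∀ x y, μ x y = μ y x) (hnn : ∀ x y, 0 ≤ μ x y)
    (hfin : ∀ x : V, (Function.support (μ x)).Finite) (hdeg : ∀ x : V, 0 < deg μ x)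
    (hconnG : ∀ x y : V, Relation.ReflTransGen (fun a b => μ a b ≠ 0) x y)
    (Ω : Finset V) (hconn : ConnectedOn μ Ω) (hcard : 2 ≤ Ω.card) :
    lam1 μ Ω + lamMax μ Ω = 2 ↔ BipartiteOn μ Ω := by
  classical
  have hΩ : Ω.Nonempty := Finset.card_pos.mp (lt_of_lt_of_le (by norm_num) hcard)
  have hl1 : lam1 μ Ω = rMin μ Ω := lam1_eq_rMin μ Ω hΩ hsymm hnn hfin hdeg
  have hlM : lamMax μ Ω = rMax μ Ω := lamMax_eq_rMax μ Ω hΩ hsymm hnn hfin hdeg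
  constructor
  · intro hsum2
    -- ground state
    obtain ⟨w, hw, hwnn⟩ := exists_nonneg_groundstate μ Ω hΩ hsymm hnn hfin hdeg
    set f1 : V → ℝ := fromU μ Ω w with hf1
    have hf1eig : IsDirEigfun μ Ω (rMin μ Ω) f1 := vec_dir μ Ω hdeg hw
    have hf1nn : ∀ x, 0 ≤ f1 x := by
      intro x
      rw [hf1]
      unfold fromU
      split_ifs with h
      · exact div_nonneg (hwnn _) (Real.sqrt_nonneg _)
      · exact le_refl 0
    have hEf : ∀ x ∈ Ω, ∑ y ∈ Ω, μ x y * f1 y = (1 - rMin μ Ω) * (deg μ x * f1 x) :=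
      fun x hx => eig_sum μ Ω hdeg hf1eig.2.2 hx
    have hf1pos : ∀ x ∈ Ω, 0 < f1 x := by
      refine prop_pos μ Ω hconn f1 (fun x _ => hf1nn x) ?_ hf1eig.1
      intro x hx hx0 y hy hμ
      have h := hEf x hx
      rw [hx0, mul_zero, mul_zero] at h
      have hterm := (Finset.sum_eq_zero_iff_of_nonneg
        (fun y' _ => mul_nonneg (hnn x y') (hf1nn y'))).mp h y hy
      rcases mul_eq_zero.mp hterm with h' | h'
      · exact absurd h' hμ
      · exact h'
    -- an edge inside Ω
    obtain ⟨a, ha, b, hb, hab⟩ := Finset.one_lt_card.mp (lt_of_lt_of_le (by norm_num) hcard)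
    obtain ⟨a', b', ha', hb', hμab⟩ :
        ∃ a' b', a' ∈ Ω ∧ b' ∈ Ω ∧ μ a' b' ≠ 0 := by
      rcases Relation.ReflTransGen.cases_head (hconn a ha b hb) with h | ⟨z, hstep, _⟩
      · exact absurd h hab
      · exact ⟨a, z, hstep.1, hstep.2.1, hstep.2.2⟩
    set c : ℝ := 1 - rMin μ Ω with hc
    have hcpos : 0 < c := by
      have h := hEf a' ha'
      have hge : μ a' b' * f1 b' ≤ ∑ y ∈ Ω, μ a' y * f1 y :=
        Finset.single_le_sum (fun y _ => mul_nonneg (hnn a' y) (hf1nn y)) hb'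
      have hpos1 : 0 < μ a' b' * f1 b' :=
        mul_pos ((hnn a' b').lt_of_ne (Ne.symm hμab)) (hf1pos b' hb')
      have hdf : 0 < deg μ a' * f1 a' := mul_pos (hdeg a') (hf1pos a' ha')
      nlinarith
    -- eigenfunction for the top eigenvalue
    obtain ⟨g, hgeig⟩ := isDirEig_rMax μ Ω hΩ hsymm hdeg
    have hMv : rMax μ Ω = 2 - rMin μ Ω := by
      rw [hl1, hlM] at hsum2; linarith
    have hEg : ∀ x ∈ Ω, ∑ y ∈ Ω, μ x y * g y = -c * (deg μ x * g x) := by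
      intro x hx
      rw [eig_sum μ Ω hdeg hgeig.2.2 hx, hMv, hc]
      ring
    have hA : ∀ x ∈ Ω, c * (deg μ x * |g x|) ≤ ∑ y ∈ Ω, μ x y * |g y| := by
      intro x hx
      have h1 : |∑ y ∈ Ω, μ x y * g y| = c * (deg μ x * |g x|) := by
        rw [hEg x hx, abs_mul, abs_mul, abs_neg, abs_of_pos hcpos,
          abs_of_pos (hdeg x)]
      calc c * (deg μ x * |g x|) = |∑ y ∈ Ω, μ x y * g y| := h1.symm
        _ ≤ ∑ y ∈ Ω, |μ x y * g y| := Finset.abs_sum_le_sum_abs _ _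
        _ = ∑ y ∈ Ω, μ x y * |g y| := by
            refine Finset.sum_congr rfl fun y _ => ?_
            rw [abs_mul, abs_of_nonneg (hnn x y)]
    have hB : ∑ x ∈ Ω, f1 x * (∑ y ∈ Ω, μ x y * |g y|)
        = ∑ x ∈ Ω, f1 x * (c * (deg μ x * |g x|)) := by
      have hswap : ∑ x ∈ Ω, f1 x * (∑ y ∈ Ω, μ x y * |g y|)
          = ∑ y ∈ Ω, |g y| * (∑ x ∈ Ω, μ y x * f1 x) := by
        simp_rw [Finset.mul_sum]
        rw [Finset.sum_comm]
        refine Finset.sum_congr rfl fun y _ => Finset.sum_congr rfl fun x _ => ?_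
        rw [hsymm y x]
        ring
      rw [hswap]
      calc ∑ y ∈ Ω, |g y| * (∑ x ∈ Ω, μ y x * f1 x)
          = ∑ y ∈ Ω, |g y| * (c * (deg μ y * f1 y)) := by
            refine Finset.sum_congr rfl fun y hy => ?_
            rw [hEf y hy]
        _ = ∑ x ∈ Ω, f1 x * (c * (deg μ x * |g x|)) := by
            refine Finset.sum_congr rfl fun y _ => ?_
            ring
    have hC : ∀ x ∈ Ω, ∑ y ∈ Ω, μ x y * |g y| = c * (deg μ x * |g x|) := by
      have hdiff : ∑ x ∈ Ω, f1 x * ((∑ y ∈ Ω, μ x y * |g y|) - c * (deg μ x * |g x|)) = 0 := by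
        simp_rw [mul_sub]
        rw [Finset.sum_sub_distrib, hB, sub_self]
      have hnn' : ∀ x ∈ Ω, 0 ≤ f1 x * ((∑ y ∈ Ω, μ x y * |g y|) - c * (deg μ x * |g x|)) :=
        fun x hx => mul_nonneg (hf1nn x) (sub_nonneg.mpr (hA x hx))
      intro x hx
      have h := (Finset.sum_eq_zero_iff_of_nonneg hnn').mp hdiff x hx
      rcases mul_eq_zero.mp h with h' | h'
      · exact absurd h' (hf1pos x hx).ne'
      · linarith [sub_eq_zero.mp h']
    have hgabs_pos : ∀ x ∈ Ω, 0 < |g x| := by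
      refine prop_pos μ Ω hconn (fun x => |g x|) (fun x _ => abs_nonneg _) ?_ ?_
      · intro x hx hx0 y hy hμ
        have hx0' : |g x| = 0 := hx0
        have h := hC x hx
        rw [hx0', mul_zero, mul_zero] at h
        show |g y| = 0
        have hterm := (Finset.sum_eq_zero_iff_of_nonneg
          (fun y' _ => mul_nonneg (hnn x y') (abs_nonneg _))).mp h y hy
        rcases mul_eq_zero.mp hterm with h' | h'
        · exact absurd h' hμ
        · exact h'
      · obtain ⟨x, hx, hgx⟩ := hgeig.1
        exact ⟨x, hx, fun h => hgx (abs_eq_zero.mp h)⟩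
    have hgne : ∀ x ∈ Ω, g x ≠ 0 := fun x hx h =>
      (hgabs_pos x hx).ne' (by rw [h, abs_zero])
    have hsign : ∀ x ∈ Ω, ∀ y ∈ Ω, μ x y ≠ 0 → (0 < g x → g y < 0) ∧ (g x < 0 → 0 < g y) := by
      intro x hx y hy hμ
      have hEx := hEg x hx
      have hCx := hC x hx
      constructor
      · intro hgx
        have hkey : ∑ y' ∈ Ω, μ x y' * (g y' + |g y'|) = 0 := by
          simp_rw [mul_add]
          rw [Finset.sum_add_distrib, hEx, hCx, abs_of_pos hgx]
          ring
        have hterm := (Finset.sum_eq_zero_iff_of_nonneg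
          (fun y' _ => mul_nonneg (hnn x y') (by linarith [neg_abs_le (g y')]))).mp hkey y hy
        rcases mul_eq_zero.mp hterm with h' | h'
        · exact absurd h' hμ
        · have hle : g y ≤ 0 := by nlinarith [abs_nonneg (g y)]
          exact lt_of_le_of_ne hle (hgne y hy)
      · intro hgx
        have hkey : ∑ y' ∈ Ω, μ x y' * (|g y'| - g y') = 0 := by
          simp_rw [mul_sub]
          rw [Finset.sum_sub_distrib, hEx, hCx, abs_of_neg hgx]
          ring
        have hterm := (Finset.sum_eq_zero_iff_of_nonneg
          (fun y' _ => mul_nonneg (hnn x y') (by linarith [le_abs_self (g y')]))).mp hkey y hy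
        rcases mul_eq_zero.mp hterm with h' | h'
        · exact absurd h' hμ
        · have hle : 0 ≤ g y := by nlinarith [abs_nonneg (g y)]
          exact lt_of_le_of_ne hle (Ne.symm (hgne y hy))
    refine ⟨Ω.filter (fun x => 0 < g x), Ω.filter (fun x => g x < 0), ?_, ?_, ?_, ?_⟩
    · rw [Finset.disjoint_left]
      intro x hx1 hx2
      rw [Finset.mem_filter] at hx1 hx2
      linarith [hx1.2, hx2.2]
    · apply Set.ext
      intro x
      simp only [Set.mem_union, Finset.coe_filter, Set.mem_setOf_eq, Finset.mem_coe]
      constructor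
      · rintro (⟨h, _⟩ | ⟨h, _⟩) <;> exact h
      · intro hx
        rcases (hgne x hx).lt_or_gt with h | h
        · exact Or.inr ⟨hx, h⟩
        · exact Or.inl ⟨hx, h⟩
    · intro x hx y hy
      rw [Finset.mem_filter] at hx hy
      by_contra hμ
      exact absurd hy.2 (not_lt.mpr ((hsign x hx.1 y hy.1 hμ).1 hx.2).le)
    · intro x hx y hy
      rw [Finset.mem_filter] at hx hy
      by_contra hμ
      exact absurd hy.2 (not_lt.mpr ((hsign x hx.1 y hy.1 hμ).2 hx.2).le)
  · intro hbip
    have hSne : {l : ℝ | IsDirEig μ Ω l}.Nonempty := ⟨_, isDirEig_rMin μ Ω hΩ hsymm hdeg⟩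
    have hbb : BddBelow {l : ℝ | IsDirEig μ Ω l} :=
      ⟨0, fun l hl => (dirEig_bounds μ Ω hsymm hnn hfin hdeg hl).1⟩
    have hba : BddAbove {l : ℝ | IsDirEig μ Ω l} :=
      ⟨2, fun l hl => (dirEig_bounds μ Ω hsymm hnn hfin hdeg hl).2⟩
    have hflip : ∀ l ∈ {l : ℝ | IsDirEig μ Ω l}, (2 - l) ∈ {l : ℝ | IsDirEig μ Ω l} :=
      fun l hl => bip_flip μ Ω hdeg hbip hl
    have h1 : lamMax μ Ω ≤ 2 - lam1 μ Ω := by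
      refine csSup_le hSne fun l hl => ?_
      have h := csInf_le hbb (hflip l hl)
      have : lam1 μ Ω ≤ 2 - l := h
      linarith
    have h2 : 2 - lamMax μ Ω ≤ lam1 μ Ω := by
      refine le_csInf hSne fun l hl => ?_
      have h := le_csSup hba (hflip l hl)
      have : 2 - l ≤ lamMax μ Ω := h
      linarith
    linarith
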